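/- Let d ≥ 1, let ψ : ℝ^d → [0,∞) be measurable, let μ be a Borel measure on ℝ^d, and fix b ∈ (0,2) and t > 0. Set w(s,ξ) = s·sinc( s·√(ψ(ξ)) ) for s ≥ 0 and ξ ∈ ℝ^d. Then there exists a constant C > 0, depending only on b, such that ∫₀¹ ε^{−1−b} ( sup_{r∈[0,ε]} ∫₀ᵗ ∫_{ℝ^d} | w(s+r,ξ) − w(s,ξ) |² μ(dξ) ds ) dε ≤ C·t·∫_{ℝ^d} (1 + ψ(ξ))^{(b/2)−1} μ(dξ). -/

import Mathlib

open MeasureTheory Set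
open scoped ENNReal

/-- `sinc x = sin x / x` for `x ≠ 0`, `sinc 0 = 1`. -/
noncomputable def sinc (x : ℝ) : ℝ := if x = 0 then 1 else Real.sin x / x

lemma sin_lip (x y : ℝ) : |Real.sin x - Real.sin y| ≤ |x - y| := by
  rw [Real.sin_sub_sin, abs_mul, abs_mul]
  have h1 : |Real.sin ((x - y) / 2)| ≤ |(x - y) / 2| := Real.abs_sin_le_abs
  have h2 : |Real.cos ((x + y) / 2)| ≤ 1 := Real.abs_cos_le_one _
  calc |(2:ℝ)| * |Real.sin ((x - y) / 2)| * |Real.cos ((x + y) / 2)|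
      ≤ |(2:ℝ)| * |(x - y) / 2| * 1 := by
        apply mul_le_mul (mul_le_mul_of_nonneg_left h1 (abs_nonneg _)) h2
          (abs_nonneg _) (by positivity)
    _ = |x - y| := by rw [abs_div, mul_one, abs_two]; field_simp

lemma mul_sinc (a x : ℝ) (ha : a ≠ 0) : x * sinc (x * a) = Real.sin (x * a) / a := by
  rcases eq_or_ne x 0 with rfl | hx
  · simp [sinc]
  · rw [sinc, if_neg (mul_ne_zero hx ha)]
    field_simp

lemma diff_le_r (a s r : ℝ) (ha : 0 ≤ a) (hr : 0 ≤ r) :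
    |(s + r) * sinc ((s + r) * a) - s * sinc (s * a)| ≤ r := by
  rcases eq_or_lt_of_le ha with rfl | ha'
  · simp [sinc, abs_of_nonneg hr]
  · rw [mul_sinc a _ ha'.ne', mul_sinc a _ ha'.ne', div_sub_div_same, abs_div,
      abs_of_pos ha', div_le_iff₀ ha']
    calc |Real.sin ((s + r) * a) - Real.sin (s * a)| ≤ |(s + r) * a - s * a| := sin_lip _ _
      _ = r * a := by
          rw [← sub_mul, add_sub_cancel_left, abs_mul, abs_of_nonneg hr, abs_of_pos ha']

lemma diff_le_inv (a s r : ℝ) (ha : 0 < a) :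
    |(s + r) * sinc ((s + r) * a) - s * sinc (s * a)| ≤ 2 / a := by
  rw [mul_sinc a _ ha.ne', mul_sinc a _ ha.ne', div_sub_div_same, abs_div, abs_of_pos ha]
  gcongr
  calc |Real.sin ((s + r) * a) - Real.sin (s * a)|
      ≤ |Real.sin ((s + r) * a)| + |Real.sin (s * a)| := abs_sub _ _
    _ ≤ 1 + 1 := add_le_add (Real.abs_sin_le_one _) (Real.abs_sin_le_one _)
    _ = 2 := by norm_num

/-- key pointwise bound for the squared increment -/
lemma sq_diff_le (p s r ε : ℝ) (hp : 0 ≤ p) (hr : 0 ≤ r) (hrε : r ≤ ε) (hε : ε ≤ 1) :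
    ((s + r) * sinc ((s + r) * Real.sqrt p) - s * sinc (s * Real.sqrt p)) ^ 2
      ≤ min (ε ^ 2) (8 / (1 + p)) := by
  set D := (s + r) * sinc ((s + r) * Real.sqrt p) - s * sinc (s * Real.sqrt p) with hD
  have hsq : 0 ≤ Real.sqrt p := Real.sqrt_nonneg p
  have h1 : |D| ≤ r := diff_le_r _ s r hsq hr
  have hDsq : D ^ 2 = |D| ^ 2 := (sq_abs D).symm
  refine le_min ?_ ?_
  · rw [hDsq]
    exact pow_le_pow_left₀ (abs_nonneg _) (h1.trans hrε) 2
  · rcases le_or_gt p 1 with hp1 | hp1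
    · have : D ^ 2 ≤ 1 := by
        rw [hDsq]
        calc |D| ^ 2 ≤ 1 ^ 2 := pow_le_pow_left₀ (abs_nonneg _) (h1.trans (hrε.trans hε)) 2
          _ = 1 := one_pow 2
      refine this.trans ?_
      rw [le_div_iff₀ (by linarith)]
      linarith
    · have hp0 : 0 < p := by linarith
      have hsq0 : 0 < Real.sqrt p := Real.sqrt_pos.2 hp0
      have h2 : |D| ≤ 2 / Real.sqrt p := diff_le_inv _ s r hsq0
      have : D ^ 2 ≤ (2 / Real.sqrt p) ^ 2 := by
        rw [hDsq]; exact pow_le_pow_left₀ (abs_nonneg _) h2 2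
      refine this.trans ?_
      rw [div_pow, Real.sq_sqrt hp0.le]
      rw [div_le_div_iff₀ hp0 (by linarith)]
      nlinarith

/-- the decisive one-dimensional integral bound -/
lemma key_int (b : ℝ) (hb : b ∈ Ioo (0:ℝ) 2) (K : ℝ) (hK : 0 < K) :
    (∫⁻ ε in Ioc (0:ℝ) 1, ENNReal.ofReal (ε ^ (-1 - b)) * ENNReal.ofReal (min (ε ^ 2) K))
      ≤ ENNReal.ofReal ((1 / (2 - b) + 1 / b) * K ^ (1 - b / 2)) := by
  obtain ⟨hb0, hb2⟩ := hb
  set m := Real.sqrt K with hm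
  have hm0 : 0 < m := Real.sqrt_pos.2 hK
  set g : ℝ → ℝ≥0∞ := fun ε =>
    (Ioc (0:ℝ) m).indicator (fun ε => ENNReal.ofReal (ε ^ (1 - b))) ε +
    (Ioi m).indicator (fun ε => ENNReal.ofReal (K * ε ^ (-1 - b))) ε with hg
  have hgmeas : Measurable g := by
    apply Measurable.add
    · exact (Measurable.ennreal_ofReal (by fun_prop)).indicator measurableSet_Ioc
    · exact (Measurable.ennreal_ofReal (by fun_prop)).indicator measurableSet_Ioi
  have hpt : ∀ ε ∈ Ioc (0:ℝ) 1,
      ENNReal.ofReal (ε ^ (-1 - b)) * ENNReal.ofReal (min (ε ^ 2) K) ≤ g ε := by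
    intro ε hε
    obtain ⟨hε0, hε1⟩ := hε
    rw [← ENNReal.ofReal_mul (Real.rpow_nonneg hε0.le _)]
    rcases le_or_gt ε m with hεm | hεm
    · refine le_trans ?_ (le_add_of_nonneg_right (zero_le'))
      have hmem : (Ioc (0:ℝ) m).indicator (fun ε => ENNReal.ofReal (ε ^ (1 - b))) ε
          = ENNReal.ofReal (ε ^ (1 - b)) := Set.indicator_of_mem (Set.mem_Ioc.mpr ⟨hε0, hεm⟩) _
      rw [hmem]
      apply ENNReal.ofReal_le_ofReal
      calc ε ^ (-1 - b) * min (ε ^ 2) K ≤ ε ^ (-1 - b) * ε ^ 2 := by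
            apply mul_le_mul_of_nonneg_left (min_le_left _ _) (Real.rpow_nonneg hε0.le _)
        _ = ε ^ (1 - b) := by
            rw [← Real.rpow_natCast ε 2, ← Real.rpow_add hε0]
            norm_num
            congr 1
            ring
    · refine le_trans ?_ (le_add_of_nonneg_left (zero_le'))
      have hmem : (Ioi m).indicator (fun ε => ENNReal.ofReal (K * ε ^ (-1 - b))) ε
          = ENNReal.ofReal (K * ε ^ (-1 - b)) := Set.indicator_of_mem (Set.mem_Ioi.mpr hεm) _
      rw [hmem]
      apply ENNReal.ofReal_le_ofReal
      rw [mul_comm K _]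
      exact mul_le_mul_of_nonneg_left (min_le_right _ _) (Real.rpow_nonneg hε0.le _)
  calc (∫⁻ ε in Ioc (0:ℝ) 1, ENNReal.ofReal (ε ^ (-1 - b)) * ENNReal.ofReal (min (ε ^ 2) K))
      ≤ ∫⁻ ε in Ioc (0:ℝ) 1, g ε := setLIntegral_mono hgmeas hpt
    _ ≤ ∫⁻ ε, g ε := setLIntegral_le_lintegral _ _
    _ = (∫⁻ ε in Ioc (0:ℝ) m, ENNReal.ofReal (ε ^ (1 - b))) +
        ∫⁻ ε in Ioi m, ENNReal.ofReal (K * ε ^ (-1 - b)) := by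
        rw [hg, lintegral_add_left
          ((Measurable.ennreal_ofReal (by fun_prop)).indicator measurableSet_Ioc),
          lintegral_indicator measurableSet_Ioc, lintegral_indicator measurableSet_Ioi]
    _ ≤ ENNReal.ofReal ((1 / (2 - b) + 1 / b) * K ^ (1 - b / 2)) := by
        have hint1 : IntegrableOn (fun ε : ℝ => ε ^ (1 - b)) (Ioc 0 m) :=
          (intervalIntegral.intervalIntegrable_rpow' (by linarith)).1
        have hint2 : IntegrableOn (fun ε : ℝ => K * ε ^ (-1 - b)) (Ioi m) :=
          (integrableOn_Ioi_rpow_of_lt (by linarith) hm0).const_mul K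
        have e1 : (∫⁻ ε in Ioc (0:ℝ) m, ENNReal.ofReal (ε ^ (1 - b)))
            = ENNReal.ofReal (m ^ (2 - b) / (2 - b)) := by
          rw [← ofReal_integral_eq_lintegral_ofReal hint1
            ((ae_restrict_iff' measurableSet_Ioc).2 (ae_of_all _
              fun x hx => Real.rpow_nonneg hx.1.le _))]
          congr 1
          rw [← intervalIntegral.integral_of_le hm0.le,
            integral_rpow (Or.inl (by linarith))]
          rw [Real.zero_rpow (by intro h; rw [show (1:ℝ) - b + 1 = 2 - b by ring] at h; linarith)]
          rw [show (1:ℝ) - b + 1 = 2 - b by ring, sub_zero]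
        have e2 : (∫⁻ ε in Ioi m, ENNReal.ofReal (K * ε ^ (-1 - b)))
            = ENNReal.ofReal (K * (m ^ (-b) / b)) := by
          rw [← ofReal_integral_eq_lintegral_ofReal hint2
            ((ae_restrict_iff' measurableSet_Ioi).2 (ae_of_all _
              fun x hx => mul_nonneg hK.le
                (Real.rpow_nonneg (hm0.trans hx).le _)))]
          congr 1
          rw [MeasureTheory.integral_const_mul, integral_Ioi_rpow_of_lt (by linarith) hm0]
          congr 1
          rw [show (-1:ℝ) - b + 1 = -b by ring, neg_div, div_neg, neg_neg]
        rw [e1, e2, ← ENNReal.ofReal_add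
          (div_nonneg (Real.rpow_nonneg hm0.le _) (by linarith))
          (mul_nonneg hK.le (div_nonneg (Real.rpow_nonneg hm0.le _) hb0.le))]
        apply ENNReal.ofReal_le_ofReal
        have hm2b : m ^ (2 - b) = K ^ (1 - b / 2) := by
          rw [hm, Real.sqrt_eq_rpow, ← Real.rpow_mul hK.le]
          congr 1
          ring
        have hmb : K * m ^ (-b) = K ^ (1 - b / 2) := by
          rw [hm, Real.sqrt_eq_rpow, ← Real.rpow_mul hK.le]
          nth_rewrite 1 [← Real.rpow_one K]
          rw [← Real.rpow_add hK]
          congr 1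
          ring
        rw [hm2b, mul_div_assoc' K _ b, hmb]
        apply le_of_eq
        ring

theorem stmt_16 (b : ℝ) (hb : b ∈ Ioo (0 : ℝ) 2) :
    ∃ C : ℝ, 0 < C ∧
      ∀ (d : ℕ), 1 ≤ d →
      ∀ (ψ : EuclideanSpace ℝ (Fin d) → ℝ)
        (μ : Measure (EuclideanSpace ℝ (Fin d))) (t : ℝ),
        Measurable ψ → (∀ ξ, 0 ≤ ψ ξ) → 0 < t →
        (∫⁻ ε in Ioc (0 : ℝ) 1, ENNReal.ofReal (ε ^ (-1 - b)) *
            ⨆ r ∈ Icc (0 : ℝ) ε,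
              ∫⁻ s in Ioc (0 : ℝ) t,
                ∫⁻ ξ, ENNReal.ofReal
                  (((s + r) * sinc ((s + r) * Real.sqrt (ψ ξ)) -
                      s * sinc (s * Real.sqrt (ψ ξ))) ^ 2) ∂μ) ≤
          ENNReal.ofReal (C * t) *
            ∫⁻ ξ, ENNReal.ofReal ((1 + ψ ξ) ^ (b / 2 - 1)) ∂μ := by
  obtain ⟨hb0, hb2⟩ := hb
  set C0 : ℝ := 1 / (2 - b) + 1 / b with hC0
  have hC0pos : 0 < C0 := by
    have h2b : (0:ℝ) < 2 - b := by linarith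
    positivity
  refine ⟨8 * C0, by linarith, ?_⟩
  intro d hd ψ μ t hψ hψ0 ht
  have hgmeas : Measurable fun ξ => ENNReal.ofReal ((1 + ψ ξ) ^ (b / 2 - 1)) :=
    Measurable.ennreal_ofReal (by fun_prop)
  rcases eq_top_or_lt_top (∫⁻ ξ, ENNReal.ofReal ((1 + ψ ξ) ^ (b / 2 - 1)) ∂μ) with hI | hI
  · rw [hI, ENNReal.mul_top (ENNReal.ofReal_pos.2 (by positivity)).ne']
    exact le_top
  -- μ is σ-finite since the weight is everywhere positive with finite integral
  have : SigmaFinite μ := by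
    apply MeasureTheory.Measure.sigmaFinite_of_countable
      (countable_range fun n : ℕ =>
        {ξ | ((n : ℝ≥0∞) + 1)⁻¹ ≤ ENNReal.ofReal ((1 + ψ ξ) ^ (b / 2 - 1))})
    · rintro s ⟨n, rfl⟩
      refine lt_of_le_of_lt (meas_ge_le_lintegral_div hgmeas.aemeasurable
        (by simp) (by simp)) ?_
      exact ENNReal.div_lt_top hI.ne (by simp)
    · rw [sUnion_range]
      ext ξ
      simp only [mem_iUnion, mem_univ, iff_true, mem_setOf_eq]
      have hg : (0:ℝ≥0∞) < ENNReal.ofReal ((1 + ψ ξ) ^ (b / 2 - 1)) :=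
        ENNReal.ofReal_pos.2 (Real.rpow_pos_of_pos (by have := hψ0 ξ; linarith) _)
      obtain ⟨n, hn⟩ := ENNReal.exists_inv_nat_lt hg.ne'
      exact ⟨n, le_trans (ENNReal.inv_le_inv' le_self_add) hn.le⟩
  set K : EuclideanSpace ℝ (Fin d) → ℝ := fun ξ => 8 / (1 + ψ ξ) with hKdef
  have hKpos : ∀ ξ, 0 < K ξ := fun ξ =>
    div_pos (by norm_num) (by have := hψ0 ξ; linarith)
  -- Step 1 : bound the LHS by a product integrand
  have step1 : (∫⁻ ε in Ioc (0 : ℝ) 1, ENNReal.ofReal (ε ^ (-1 - b)) *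
            ⨆ r ∈ Icc (0 : ℝ) ε,
              ∫⁻ s in Ioc (0 : ℝ) t,
                ∫⁻ ξ, ENNReal.ofReal
                  (((s + r) * sinc ((s + r) * Real.sqrt (ψ ξ)) -
                      s * sinc (s * Real.sqrt (ψ ξ))) ^ 2) ∂μ)
      ≤ ∫⁻ ε in Ioc (0 : ℝ) 1, ENNReal.ofReal t *
          (ENNReal.ofReal (ε ^ (-1 - b)) *
            ∫⁻ ξ, ENNReal.ofReal (min (ε ^ 2) (K ξ)) ∂μ) := by
    apply setLIntegral_mono' measurableSet_Ioc
    intro ε hε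
    rw [mul_left_comm]
    apply mul_le_mul_right
    apply iSup₂_le
    intro r hr
    calc (∫⁻ s in Ioc (0 : ℝ) t,
            ∫⁻ ξ, ENNReal.ofReal
              (((s + r) * sinc ((s + r) * Real.sqrt (ψ ξ)) -
                  s * sinc (s * Real.sqrt (ψ ξ))) ^ 2) ∂μ)
        ≤ ∫⁻ _ in Ioc (0 : ℝ) t, ∫⁻ ξ, ENNReal.ofReal (min (ε ^ 2) (K ξ)) ∂μ := by
          apply setLIntegral_mono' measurableSet_Ioc
          intro s _
          apply lintegral_mono
          intro ξ
          exact ENNReal.ofReal_le_ofReal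
            (sq_diff_le (ψ ξ) s r ε (hψ0 ξ) hr.1 hr.2 hε.2)
      _ = (∫⁻ ξ, ENNReal.ofReal (min (ε ^ 2) (K ξ)) ∂μ) * volume (Ioc (0:ℝ) t) :=
          setLIntegral_const _ _
      _ = ENNReal.ofReal t * ∫⁻ ξ, ENNReal.ofReal (min (ε ^ 2) (K ξ)) ∂μ := by
          rw [Real.volume_Ioc, sub_zero, mul_comm]
  refine step1.trans ?_
  -- Step 2 : pull out t, swap integrals, apply the key integral bound
  have meas2 : Measurable fun p : ℝ × EuclideanSpace ℝ (Fin d) =>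
      ENNReal.ofReal (p.1 ^ (-1 - b)) * ENNReal.ofReal (min (p.1 ^ 2) (K p.2)) := by
    apply Measurable.mul (f := fun p : ℝ × EuclideanSpace ℝ (Fin d) => ENNReal.ofReal (p.1 ^ (-1 - b)))
      (g := fun p => ENNReal.ofReal (min (p.1 ^ 2) (K p.2)))
    · exact Measurable.ennreal_ofReal (by fun_prop)
    · apply Measurable.ennreal_ofReal
      apply Measurable.min (by fun_prop)
      simp only [hKdef]
      exact measurable_const.div ((measurable_const.add hψ).comp measurable_snd)
  rw [lintegral_const_mul' _ _ ENNReal.ofReal_ne_top]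
  have swap : (∫⁻ ε in Ioc (0 : ℝ) 1, ENNReal.ofReal (ε ^ (-1 - b)) *
        ∫⁻ ξ, ENNReal.ofReal (min (ε ^ 2) (K ξ)) ∂μ)
      = ∫⁻ ξ, (∫⁻ ε in Ioc (0 : ℝ) 1,
          ENNReal.ofReal (ε ^ (-1 - b)) * ENNReal.ofReal (min (ε ^ 2) (K ξ))) ∂μ := by
    have h1 : ∀ ε : ℝ, ENNReal.ofReal (ε ^ (-1 - b)) *
        (∫⁻ ξ, ENNReal.ofReal (min (ε ^ 2) (K ξ)) ∂μ)
        = ∫⁻ ξ, ENNReal.ofReal (ε ^ (-1 - b)) * ENNReal.ofReal (min (ε ^ 2) (K ξ)) ∂μ := by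
      intro ε
      rw [lintegral_const_mul' _ _ ENNReal.ofReal_ne_top]
    simp_rw [h1]
    exact lintegral_lintegral_swap meas2.aemeasurable
  rw [swap]
  have perxi : ∀ ξ, (∫⁻ ε in Ioc (0 : ℝ) 1,
        ENNReal.ofReal (ε ^ (-1 - b)) * ENNReal.ofReal (min (ε ^ 2) (K ξ)))
      ≤ ENNReal.ofReal (8 * C0 * (1 + ψ ξ) ^ (b / 2 - 1)) := by
    intro ξ
    refine (key_int b ⟨hb0, hb2⟩ (K ξ) (hKpos ξ)).trans ?_
    apply ENNReal.ofReal_le_ofReal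
    have h1ψ : (0:ℝ) < 1 + ψ ξ := by have := hψ0 ξ; linarith
    have hKr : (K ξ) ^ (1 - b / 2) = 8 ^ (1 - b / 2) * (1 + ψ ξ) ^ (b / 2 - 1) := by
      have hK8 : K ξ = 8 / (1 + ψ ξ) := rfl
      rw [hK8, Real.div_rpow (by norm_num) h1ψ.le, div_eq_mul_inv,
        ← Real.rpow_neg h1ψ.le, neg_sub]
    rw [hKr]
    have h8 : (8:ℝ) ^ (1 - b / 2) ≤ 8 := by
      nth_rewrite 2 [← Real.rpow_one 8]
      apply Real.rpow_le_rpow_of_exponent_le (by norm_num) (by linarith)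
    have hpow : (0:ℝ) ≤ (1 + ψ ξ) ^ (b / 2 - 1) := Real.rpow_nonneg h1ψ.le _
    calc C0 * (8 ^ (1 - b / 2) * (1 + ψ ξ) ^ (b / 2 - 1))
        ≤ C0 * (8 * (1 + ψ ξ) ^ (b / 2 - 1)) := by
          apply mul_le_mul_of_nonneg_left (mul_le_mul_of_nonneg_right h8 hpow) hC0pos.le
      _ = 8 * C0 * (1 + ψ ξ) ^ (b / 2 - 1) := by ring
  calc ENNReal.ofReal t * ∫⁻ ξ, (∫⁻ ε in Ioc (0 : ℝ) 1,
        ENNReal.ofReal (ε ^ (-1 - b)) * ENNReal.ofReal (min (ε ^ 2) (K ξ))) ∂μ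
      ≤ ENNReal.ofReal t *
          ∫⁻ ξ, ENNReal.ofReal (8 * C0 * (1 + ψ ξ) ^ (b / 2 - 1)) ∂μ := by
        exact mul_le_mul_right (lintegral_mono perxi) _
    _ = ENNReal.ofReal (8 * C0 * t) *
          ∫⁻ ξ, ENNReal.ofReal ((1 + ψ ξ) ^ (b / 2 - 1)) ∂μ := by
        simp_rw [ENNReal.ofReal_mul (by positivity : (0:ℝ) ≤ 8 * C0)]
        rw [lintegral_const_mul' _ _ ENNReal.ofReal_ne_top]
        ring
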